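/- Let A ∈ ℝ^{d×d} be invertible, b ∈ ℝ^d, let s_i : ℝ → ℝ be C² diffeomorphisms for i = 1,…,d, and define q(x) = A s(x) + b with s(x) = (s₁(x₁), …, s_d(x_d)), so J_q(x) = A D(x) with D(x) = diag(s₁′(x₁), …, s_d′(x_d)). Let r_i : ℝ → ℝ be twice differentiable with r_i″(t) = ( s_i′(s_i⁻¹(t)) )^{−2}, and define R(z) = Σ_{i=1}^d r_i( (A⁻¹(z − b))_i ). Then for every x in the domain of q, with z = q(x), the Hessian compatibility holds: ∇²R(z) = [ J_q(x) J_q(x)ᵀ ]⁻¹ = A^{−⊤} D(x)^{−2} A⁻¹. -/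

import Mathlib

open scoped RealInnerProductSpace Matrix

lemma euclid_hasFDerivAt {d : ℕ} (M : Matrix (Fin d) (Fin d) ℝ)
    (f : EuclideanSpace ℝ (Fin d) → EuclideanSpace ℝ (Fin d))
    (x : EuclideanSpace ℝ (Fin d))
    (ψ : Fin d → (EuclideanSpace ℝ (Fin d) →L[ℝ] ℝ))
    (hf : ∀ i, HasFDerivAt (fun z => f z i) (ψ i) x)
    (hψ : ∀ i v, ψ i v = ∑ j, M i j * v j) :
    HasFDerivAt f (LinearMap.toContinuousLinearMap (Matrix.toEuclideanLin M)) x := by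
  have hF : HasFDerivAt (fun z => (fun i => f z i : Fin d → ℝ)) (ContinuousLinearMap.pi ψ) x :=
    hasFDerivAt_pi.2 hf
  have h2 := ((EuclideanSpace.equiv (Fin d) ℝ).symm.hasFDerivAt).comp x hF
  have hCLM : LinearMap.toContinuousLinearMap (Matrix.toEuclideanLin M)
      = ((EuclideanSpace.equiv (Fin d) ℝ).symm : (Fin d → ℝ) →L[ℝ] EuclideanSpace ℝ (Fin d)).comp
          (ContinuousLinearMap.pi ψ) := by
    refine ContinuousLinearMap.ext fun v => ?_
    refine PiLp.ext fun i => ?_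
    simp [Matrix.toEuclideanLin_apply, Matrix.mulVec, dotProduct, hψ, PiLp.toLp_apply]
  rw [hCLM]
  exact h2

/-- affine mixing of a separable reparameterization: for
`q(x) = A s(x) + b` with `A` invertible and `s` coordinatewise `C²` diffeomorphisms, and
`R(z) = Σᵢ rᵢ((A⁻¹(z-b))ᵢ)` with `rᵢ'' (t) = (sᵢ'(sᵢ⁻¹(t)))⁻²`, the Jacobian is
`J_q(x) = A D(x)` and Hessian compatibility `∇²R(q x) = A⁻ᵀ D(x)⁻² A⁻¹ = [J_q J_qᵀ]⁻¹` holds. -/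
theorem affine_mixing_hessian_compatibility
    {d : ℕ}
    (A : Matrix (Fin d) (Fin d) ℝ) (hA : IsUnit A.det)
    (b : EuclideanSpace ℝ (Fin d))
    (s s' : Fin d → ℝ → ℝ)
    (hsC2 : ∀ i, ContDiff ℝ 2 (s i)) (hsbij : ∀ i, Function.Bijective (s i))
    (hs' : ∀ i x, HasDerivAt (s i) (s' i x) x) (hs'ne : ∀ i x, s' i x ≠ 0)
    (sinv : Fin d → ℝ → ℝ)
    (hsinv : ∀ i, Function.LeftInverse (sinv i) (s i) ∧ Function.RightInverse (sinv i) (s i))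
    (r r' : Fin d → ℝ → ℝ)
    (hr' : ∀ i t, HasDerivAt (r i) (r' i t) t)
    (hr'' : ∀ i t, HasDerivAt (r' i) (((s' i (sinv i t)) ^ 2)⁻¹) t)
    (q : EuclideanSpace ℝ (Fin d) → EuclideanSpace ℝ (Fin d))
    (hq : ∀ x, ∀ j, q x j = (∑ i, A j i * s i (x i)) + b j)
    (R : EuclideanSpace ℝ (Fin d) → ℝ)
    (hR : ∀ z, R z = ∑ i, r i (∑ j, A⁻¹ i j * (z j - b j))) :
    ∀ x : EuclideanSpace ℝ (Fin d),
      HasFDerivAt q (LinearMap.toContinuousLinearMap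
        (Matrix.toEuclideanLin (A * Matrix.diagonal fun i => s' i (x i)))) x ∧
      HasFDerivAt (gradient R) (LinearMap.toContinuousLinearMap
        (Matrix.toEuclideanLin
          ((A⁻¹)ᵀ * ((Matrix.diagonal fun i => s' i (x i)) ^ 2)⁻¹ * A⁻¹))) (q x) ∧
      ((A⁻¹)ᵀ * ((Matrix.diagonal fun i => s' i (x i)) ^ 2)⁻¹ * A⁻¹)
          * ((A * Matrix.diagonal fun i => s' i (x i))
            * (A * Matrix.diagonal fun i => s' i (x i))ᵀ) = 1 ∧
      ((A * Matrix.diagonal fun i => s' i (x i))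
            * (A * Matrix.diagonal fun i => s' i (x i))ᵀ)
          * ((A⁻¹)ᵀ * ((Matrix.diagonal fun i => s' i (x i)) ^ 2)⁻¹ * A⁻¹) = 1 := by
  
  intro x
  set B := A⁻¹ with hB
  have hBA : B * A = 1 := Matrix.nonsing_inv_mul A hA
  have hAB : A * B = 1 := Matrix.mul_nonsing_inv A hA
  -- notation
  set D : Matrix (Fin d) (Fin d) ℝ := Matrix.diagonal fun i => s' i (x i) with hD
  have hDdet : IsUnit D.det := by
    rw [hD, Matrix.det_diagonal]
    exact isUnit_iff_ne_zero.2 (Finset.prod_ne_zero_iff.2 fun i _ => hs'ne i (x i))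
  -- (D^2)⁻¹ as a diagonal matrix
  set c : Fin d → ℝ := fun k => ((s' k (x k)) ^ 2)⁻¹ with hc
  have hD2inv : (D ^ 2)⁻¹ = Matrix.diagonal c := by
    refine Matrix.inv_eq_right_inv ?_
    have h1 : (fun i => ((fun j => s' j (x j)) ^ 2) i * c i) = fun _ => (1 : ℝ) :=
      funext fun i => mul_inv_cancel₀ (pow_ne_zero 2 (hs'ne i (x i)))
    rw [hD, Matrix.diagonal_pow, Matrix.diagonal_mul_diagonal, h1, Matrix.diagonal_one]
  have hD2det : IsUnit (D ^ 2).det := by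
    rw [Matrix.det_pow]; exact hDdet.pow 2
  have hD2 : (D ^ 2)⁻¹ * D ^ 2 = 1 := Matrix.nonsing_inv_mul _ hD2det
  have hD2' : D ^ 2 * (D ^ 2)⁻¹ = 1 := Matrix.mul_nonsing_inv _ hD2det
  -- Part 1 : Jacobian of q
  have part1 : HasFDerivAt q (LinearMap.toContinuousLinearMap
      (Matrix.toEuclideanLin (A * D))) x := by
    refine euclid_hasFDerivAt (A * D) q x
      (fun i => ∑ k, ((A * D) i k) •
        (EuclideanSpace.proj k : EuclideanSpace ℝ (Fin d) →L[ℝ] ℝ)) ?_ ?_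
    · intro i
      have hfun : (fun z => q z i) = fun z : EuclideanSpace ℝ (Fin d) =>
          (∑ k, A i k * s k (z k)) + b i := funext fun z => hq z i
      rw [hfun]
      refine HasFDerivAt.add_const (b i) ?_
      refine HasFDerivAt.fun_sum fun k _ => ?_
      have hproj : HasFDerivAt (fun z : EuclideanSpace ℝ (Fin d) => z k)
          (EuclideanSpace.proj k : EuclideanSpace ℝ (Fin d) →L[ℝ] ℝ) x :=
        (EuclideanSpace.proj (𝕜 := ℝ) k).hasFDerivAt
      have h1 : HasFDerivAt (fun z : EuclideanSpace ℝ (Fin d) => s k (z k))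
          ((s' k (x k)) • (EuclideanSpace.proj k : EuclideanSpace ℝ (Fin d) →L[ℝ] ℝ)) x :=
        (hs' k (x k)).comp_hasFDerivAt x hproj
      have h2 := h1.const_mul (A i k)
      refine h2.congr_fderiv ?_
      rw [smul_smul, hD, Matrix.mul_diagonal]
    · intro i v
      simp [PiLp.proj_apply]
  -- the gradient of R
  have hgrad : gradient R = fun z => (WithLp.toLp 2 (fun i => ∑ k, B k i * r' k (∑ j, B k j * (z j - b j))) :
      EuclideanSpace ℝ (Fin d)) := by
    refine gradient_eq fun z => ?_
    rw [hasGradientAt_iff_hasFDerivAt]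
    have hl : ∀ k, HasFDerivAt (fun z : EuclideanSpace ℝ (Fin d) => ∑ j, B k j * (z j - b j))
        (∑ j, (B k j) • (EuclideanSpace.proj j : EuclideanSpace ℝ (Fin d) →L[ℝ] ℝ)) z := by
      intro k
      refine HasFDerivAt.fun_sum fun j _ => ?_
      have hproj : HasFDerivAt (fun w : EuclideanSpace ℝ (Fin d) => w j)
          (EuclideanSpace.proj j : EuclideanSpace ℝ (Fin d) →L[ℝ] ℝ) z :=
        (EuclideanSpace.proj (𝕜 := ℝ) j).hasFDerivAt
      exact ((hproj.sub_const (b j)).const_mul (B k j))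
    have hfd : HasFDerivAt R
        (∑ k, (r' k (∑ j, B k j * (z j - b j))) •
          (∑ j, (B k j) • (EuclideanSpace.proj j : EuclideanSpace ℝ (Fin d) →L[ℝ] ℝ))) z := by
      have hfun : R = fun z : EuclideanSpace ℝ (Fin d) => ∑ i, r i (∑ j, B i j * (z j - b j)) :=
        funext hR
      rw [hfun]
      exact HasFDerivAt.fun_sum fun k _ =>
        (hr' k (∑ j, B k j * (z j - b j))).comp_hasFDerivAt z (hl k)
    refine hfd.congr_fderiv ?_
    refine (ContinuousLinearMap.ext fun v => ?_).symm
    simp only [InnerProductSpace.toDual_apply_apply, ContinuousLinearMap.sum_apply,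
      ContinuousLinearMap.smul_apply, PiLp.proj_apply, smul_eq_mul,
      PiLp.inner_apply, RCLike.inner_apply, conj_trivial]
    simp only [Finset.sum_mul, Finset.mul_sum]
    rw [Finset.sum_comm]
    refine Finset.sum_congr rfl fun k _ => Finset.sum_congr rfl fun i _ => ?_
    ring
  -- key evaluation : the inner affine functional at q x gives s k (x k)
  have hu : ∀ k, (∑ j, B k j * (q x j - b j)) = s k (x k) := by
    intro k
    have : ∀ j, q x j - b j = ∑ m, A j m * s m (x m) := by
      intro j; rw [hq x j]; ring
    calc (∑ j, B k j * (q x j - b j))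
        = ∑ j, ∑ m, B k j * (A j m * s m (x m)) := by
          refine Finset.sum_congr rfl fun j _ => ?_
          rw [this j, Finset.mul_sum]
      _ = ∑ m, (∑ j, B k j * A j m) * s m (x m) := by
          rw [Finset.sum_comm]
          refine Finset.sum_congr rfl fun m _ => ?_
          rw [Finset.sum_mul]
          exact Finset.sum_congr rfl fun j _ => by ring
      _ = ∑ m, (1 : Matrix (Fin d) (Fin d) ℝ) k m * s m (x m) := by
          refine Finset.sum_congr rfl fun m _ => ?_
          congr 1
          rw [← hBA]
          simp [Matrix.mul_apply]
      _ = s k (x k) := by simp [Matrix.one_apply]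
  -- Part 2 : derivative of gradient R at q x
  have part2 : HasFDerivAt (gradient R) (LinearMap.toContinuousLinearMap
      (Matrix.toEuclideanLin (Bᵀ * (D ^ 2)⁻¹ * B))) (q x) := by
    rw [hgrad, hD2inv]
    refine euclid_hasFDerivAt (Bᵀ * Matrix.diagonal c * B) _ (q x)
      (fun i => ∑ k, (B k i * c k) •
        (∑ j, (B k j) • (EuclideanSpace.proj j : EuclideanSpace ℝ (Fin d) →L[ℝ] ℝ))) ?_ ?_
    · intro i
      simp only [WithLp.ofLp_toLp]
      refine HasFDerivAt.fun_sum fun k _ => ?_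
      have hl : HasFDerivAt (fun z : EuclideanSpace ℝ (Fin d) => ∑ j, B k j * (z j - b j))
          (∑ j, (B k j) • (EuclideanSpace.proj j : EuclideanSpace ℝ (Fin d) →L[ℝ] ℝ)) (q x) := by
        refine HasFDerivAt.fun_sum fun j _ => ?_
        have hproj : HasFDerivAt (fun w : EuclideanSpace ℝ (Fin d) => w j)
            (EuclideanSpace.proj j : EuclideanSpace ℝ (Fin d) →L[ℝ] ℝ) (q x) :=
          (EuclideanSpace.proj (𝕜 := ℝ) j).hasFDerivAt
        exact ((hproj.sub_const (b j)).const_mul (B k j))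
      have hrd : HasDerivAt (r' k) (c k) (∑ j, B k j * (q x j - b j)) := by
        rw [hu k, hc]
        have := hr'' k (s k (x k))
        rwa [(hsinv k).1 (x k)] at this
      have h1 := hrd.comp_hasFDerivAt (q x) hl
      have h2 := h1.const_mul (B k i)
      refine h2.congr_fderiv ?_
      rw [smul_smul, mul_comm (B k i) (c k)]
    · intro i v
      simp only [ContinuousLinearMap.sum_apply, ContinuousLinearMap.smul_apply,
        PiLp.proj_apply, smul_eq_mul]
      simp only [Finset.mul_sum, Finset.sum_mul]
      rw [Finset.sum_comm]
      refine Finset.sum_congr rfl fun j _ => ?_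
      rw [Matrix.mul_apply, Finset.sum_mul]
      refine Finset.sum_congr rfl fun k _ => ?_
      rw [Matrix.mul_diagonal, Matrix.transpose_apply]
      ring
  refine ⟨part1, part2, ?_, ?_⟩
  · have key : (A * D) * (A * D)ᵀ = A * (D ^ 2 * Aᵀ) := by
      rw [Matrix.transpose_mul, Matrix.diagonal_transpose, ← hD, pow_two]
      simp only [Matrix.mul_assoc]
    rw [key]
    calc Bᵀ * (D ^ 2)⁻¹ * B * (A * (D ^ 2 * Aᵀ))
        = Bᵀ * ((D ^ 2)⁻¹ * ((B * A) * (D ^ 2 * Aᵀ))) := by simp only [Matrix.mul_assoc]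
      _ = Bᵀ * ((D ^ 2)⁻¹ * (D ^ 2 * Aᵀ)) := by rw [hBA, Matrix.one_mul]
      _ = Bᵀ * (((D ^ 2)⁻¹ * D ^ 2) * Aᵀ) := by simp only [Matrix.mul_assoc]
      _ = Bᵀ * Aᵀ := by rw [hD2, Matrix.one_mul]
      _ = (A * B)ᵀ := (Matrix.transpose_mul A B).symm
      _ = 1 := by rw [hAB, Matrix.transpose_one]
  · have key : (A * D) * (A * D)ᵀ = A * (D ^ 2 * Aᵀ) := by
      rw [Matrix.transpose_mul, Matrix.diagonal_transpose, ← hD, pow_two]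
      simp only [Matrix.mul_assoc]
    rw [key]
    calc A * (D ^ 2 * Aᵀ) * (Bᵀ * (D ^ 2)⁻¹ * B)
        = A * (D ^ 2 * ((Aᵀ * Bᵀ) * ((D ^ 2)⁻¹ * B))) := by simp only [Matrix.mul_assoc]
      _ = A * (D ^ 2 * ((D ^ 2)⁻¹ * B)) := by
          rw [← Matrix.transpose_mul, hBA, Matrix.transpose_one, Matrix.one_mul]
      _ = A * ((D ^ 2 * (D ^ 2)⁻¹) * B) := by simp only [Matrix.mul_assoc]
      _ = A * B := by rw [hD2', Matrix.one_mul]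
      _ = 1 := hAB
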